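/- For each n ∈ {3, 4, 5}, there do not exist n pairwise distinct rational numbers x₁, …, xₙ satisfying Σᵢ xᵢ = 0, Σᵢ xᵢ² = n/2, Σᵢ xᵢ³ = 0, Σᵢ xᵢ⁴ = 3n/4, and Σᵢ xᵢ⁵ = 0. -/
import Mathlib

lemma rat_sq_ne_nat (m : ℕ) (hm : ¬ IsSquare m) (q : ℚ) : q ^ 2 ≠ (m : ℚ) := by
  intro hq
  exact hm (Rat.isSquare_natCast_iff.mp ⟨q, by rw [← hq]; ring⟩)

lemma not_sq_2 : ¬ IsSquare (2 : ℕ) := by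
  rintro ⟨r, hr⟩
  have : r ≤ 2 := by nlinarith
  interval_cases r <;> omega

lemma not_sq_3 : ¬ IsSquare (3 : ℕ) := by
  rintro ⟨r, hr⟩
  have : r ≤ 3 := by nlinarith
  interval_cases r <;> omega

lemma not_sq_35 : ¬ IsSquare (35 : ℕ) := by
  rintro ⟨r, hr⟩
  have : r ≤ 35 := by nlinarith
  interval_cases r <;> omega

/-- Theorem 2.15: for `n ∈ {3,4,5}` there is no rational 5-design with `n` points for
the Hermite measure, i.e. no `n` pairwise distinct rationals with the given power sums. -/
theorem stmt_9 (n : ℕ) (hn : n ∈ ({3, 4, 5} : Set ℕ)) :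
    ¬ ∃ x : Fin n → ℚ, Function.Injective x ∧
      ∑ i, x i = 0 ∧
      ∑ i, (x i) ^ 2 = (n : ℚ) / 2 ∧
      ∑ i, (x i) ^ 3 = 0 ∧
      ∑ i, (x i) ^ 4 = 3 * (n : ℚ) / 4 ∧
      ∑ i, (x i) ^ 5 = 0 := by
  simp only [Set.mem_insert_iff, Set.mem_singleton_iff] at hn
  rcases hn with rfl | rfl | rfl
  · rintro ⟨x, hinj, h1, h2, h3, h4, h5⟩
    simp only [Fin.sum_univ_three, Nat.cast_ofNat] at h1 h2 h3 h4 h5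
    norm_num at h1 h2 h3 h4 h5
    set a := x 0; set b := x 1; set c := x 2
    have habc : a * b * c = 0 := by
      linear_combination (1/3) * h3 + ((a*b + a*c + b*c - (a^2 + b^2 + c^2))/3) * h1
    rcases mul_eq_zero.mp habc with hab | hc
    · rcases mul_eq_zero.mp hab with ha | hb
      · have key : (2 * b) ^ 2 = 3 := by
          linear_combination 2*h2 + 2*(b - c)*h1 + (2*c - 2*a - 2*b)*ha
        exact rat_sq_ne_nat 3 not_sq_3 (2 * b) (by exact_mod_cast key)
      · have key : (2 * a) ^ 2 = 3 := by
          linear_combination 2*h2 + 2*(a - c)*h1 + (2*c - 2*a - 2*b)*hb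
        exact rat_sq_ne_nat 3 not_sq_3 (2 * a) (by exact_mod_cast key)
    · have key : (2 * a) ^ 2 = 3 := by
        linear_combination 2*h2 + 2*(a - b)*h1 + (2*b - 2*a - 2*c)*hc
      exact rat_sq_ne_nat 3 not_sq_3 (2 * a) (by exact_mod_cast key)
  · rintro ⟨x, hinj, h1, h2, h3, h4, h5⟩
    simp only [Fin.sum_univ_four, Nat.cast_ofNat] at h1 h2 h3 h4 h5
    norm_num at h1 h2 h3 h4 h5
    set a := x 0; set b := x 1; set c := x 2; set d := x 3
    have he2 : a*b + a*c + a*d + b*c + b*d + c*d = -1 := by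
      linear_combination ((a+b+c+d)/2) * h1 - (1/2) * h2
    have he3 : a*b*c + a*b*d + a*c*d + b*c*d = 0 := by
      linear_combination (1/3) * h3 +
        (((a*b+a*c+a*d+b*c+b*d+c*d) - (a^2+b^2+c^2+d^2))/3) * h1
    have he4 : a*b*c*d = -1/4 := by
      linear_combination ((a^3+b^3+c^3+d^3 + a*b*c+a*b*d+a*c*d+b*c*d)/4) * h1
        - ((a^2+b^2+c^2+d^2)/4) * he2 + (1/4) * h2 - (1/4) * h4
    have key : (2*a^2 - 1) ^ 2 = 2 := by
      linear_combination 4*a^3*h1 - 4*a^2*he2 + 4*a*he3 - 4*he4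
    exact rat_sq_ne_nat 2 not_sq_2 (2*a^2 - 1) (by exact_mod_cast key)
  · rintro ⟨x, hinj, h1, h2, h3, h4, h5⟩
    simp only [Fin.sum_univ_five, Nat.cast_ofNat] at h1 h2 h3 h4 h5
    norm_num at h1 h2 h3 h4 h5
    set a := x 0; set b := x 1; set c := x 2; set d := x 3; set e := x 4
    have he2 : a*b+a*c+a*d+a*e+b*c+b*d+b*e+c*d+c*e+d*e = -5/4 := by
      linear_combination ((a+b+c+d+e)/2) * h1 - (1/2) * h2
    have he3 : a*b*c+a*b*d+a*b*e+a*c*d+a*c*e+a*d*e+b*c*d+b*c*e+b*d*e+c*d*e = 0 := by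
      linear_combination (1/3) * h3 +
        (((a*b+a*c+a*d+a*e+b*c+b*d+b*e+c*d+c*e+d*e) - (a^2+b^2+c^2+d^2+e^2))/3) * h1
    have he4 : a*b*c*d+a*b*c*e+a*b*d*e+a*c*d*e+b*c*d*e = -5/32 := by
      linear_combination ((a^3+b^3+c^3+d^3+e^3 +
          a*b*c+a*b*d+a*b*e+a*c*d+a*c*e+a*d*e+b*c*d+b*c*e+b*d*e+c*d*e)/4) * h1
        - ((a^2+b^2+c^2+d^2+e^2)/4) * he2 + (5/16) * h2 - (1/4) * h4
    have he5 : a*b*c*d*e = 0 := by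
      linear_combination (1/5) * h5
        - ((a^4+b^4+c^4+d^4+e^4 - (a*b*c*d+a*b*c*e+a*b*d*e+a*c*d*e+b*c*d*e))/5) * h1
        + ((a^3+b^3+c^3+d^3+e^3)/5) * he2 - (1/4) * h3
        - ((a^2+b^2+c^2+d^2+e^2)/5) * he3
    have hza : a * ((8*a^2 - 5)^2 - 35) = 0 := by
      linear_combination 64*(a^4*h1 - a^3*he2 + a^2*he3 - a*he4 + he5)
    have hzb : b * ((8*b^2 - 5)^2 - 35) = 0 := by
      linear_combination 64*(b^4*h1 - b^3*he2 + b^2*he3 - b*he4 + he5)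
    have ha0 : a = 0 := by
      rcases mul_eq_zero.mp hza with h | h
      · exact h
      · have key : (8*a^2 - 5)^2 = 35 := by linear_combination h
        exact absurd (by exact_mod_cast key) (rat_sq_ne_nat 35 not_sq_35 (8*a^2 - 5))
    have hb0 : b = 0 := by
      rcases mul_eq_zero.mp hzb with h | h
      · exact h
      · have key : (8*b^2 - 5)^2 = 35 := by linear_combination h
        exact absurd (by exact_mod_cast key) (rat_sq_ne_nat 35 not_sq_35 (8*b^2 - 5))
    have hab : a = b := by rw [ha0, hb0]
    exact absurd (hinj hab) (by decide)
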